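/- For every integer n ≥ 1, there exists a square matrix A over the field ZMod 3, with rows indexed by the even-weight vertices of the n-dimensional hypercube Q_n and columns indexed by the odd-weight vertices of Q_n (each index set having size 2^(n-1)), such that: (1) A is invertible; (2) for every even-weight vertex x and odd-weight vertex y, A x y ≠ 0 if and only if x and y are adjacent in Q_n; and (3) for every odd-weight vertex y and even-weight vertex x, A⁻¹ y x ≠ 0 if and only if y and x are adjacent in Q_n. -/

import Mathlib

/-- The `n`-dimensional hypercube graph: vertices are elements of `{0,1}^n`,
adjacent iff they differ in exactly one coordinate. -/
def hypercube (n : ℕ) : SimpleGraph (Fin n → ZMod 2) where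
  Adj x y := ∃! i, x i ≠ y i
  symm := by constructor; rintro x y ⟨i, hi, hu⟩; exact ⟨i, Ne.symm hi, fun j hj => hu j (Ne.symm hj)⟩
  loopless := by constructor; rintro x ⟨i, hi, -⟩; exact hi rfl

/-- The even-weight vertices of the hypercube `Q_n`. -/
def evenV (n : ℕ) : Type := {x : Fin n → ZMod 2 // ∑ i, x i = 0}

/-- The odd-weight vertices of the hypercube `Q_n`. -/
def oddV (n : ℕ) : Type := {x : Fin n → ZMod 2 // ∑ i, x i ≠ 0}

instance (n : ℕ) : Fintype (evenV n) := by unfold evenV; infer_instance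
instance (n : ℕ) : Fintype (oddV n) := by unfold oddV; infer_instance
instance (n : ℕ) : DecidableEq (evenV n) := by unfold evenV; infer_instance
instance (n : ℕ) : DecidableEq (oddV n) := by unfold oddV; infer_instance

/-- For every `n ≥ 1` there is an invertible matrix `A` over `ZMod 3`, with rows
indexed by the even-weight vertices of `Q_n` and columns by the odd-weight vertices
(each index set of size `2^(n-1)`), such that both `A` and its inverse `B` are
nonzero exactly at the adjacent pairs of `Q_n`. -/
lemma zmod2_cases (a : ZMod 2) : a = 0 ∨ a = 1 := by revert a; decide

lemma hyp_adj (n : ℕ) (x y : Fin n → ZMod 2) :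
    (hypercube n).Adj x y ↔ ∃! i, x i ≠ y i := Iff.rfl

lemma adj_cons (n : ℕ) (a b : ZMod 2) (x y : Fin n → ZMod 2) :
    (hypercube (n+1)).Adj (Fin.cons a x) (Fin.cons b y) ↔
      (a = b ∧ (hypercube n).Adj x y) ∨ (a ≠ b ∧ x = y) := by
  rw [hyp_adj]
  constructor
  · rintro ⟨i, hi, hu⟩
    induction i using Fin.cases with
    | zero =>
      simp only [Fin.cons_zero] at hi
      refine Or.inr ⟨hi, funext fun j => ?_⟩
      by_contra hj
      exact (Fin.succ_ne_zero j) (hu j.succ (by simpa using hj))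
    | succ j =>
      simp only [Fin.cons_succ] at hi
      refine Or.inl ⟨?_, j, hi, fun k hk => Fin.succ_injective _ (hu k.succ (by simpa using hk))⟩
      by_contra hab
      exact (Fin.succ_ne_zero j).symm (hu 0 (by simpa using hab))
  · rintro (⟨hab, j, hj, hu⟩ | ⟨hab, hxy⟩)
    · refine ⟨j.succ, by simpa using hj, fun i hi => ?_⟩
      induction i using Fin.cases with
      | zero => simp only [Fin.cons_zero] at hi; exact absurd hab hi
      | succ k => simpa using congrArg Fin.succ (hu k (by simpa using hi))
    · refine ⟨0, by simpa using hab, fun i hi => ?_⟩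
      induction i using Fin.cases with
      | zero => rfl
      | succ k => simp [Fin.cons_succ, hxy] at hi

lemma zmod2_ne_zero {a : ZMod 2} (h : a ≠ 0) : a = 1 := (zmod2_cases a).resolve_left h

def consE (n : ℕ) : evenV (n+1) ≃ evenV n ⊕ oddV n where
  toFun x :=
    if h : x.val 0 = 0 then
      .inl ⟨Fin.tail x.val, by
        have hx := x.2; rw [Fin.sum_univ_succ, h, zero_add] at hx
        simpa [Fin.tail] using hx⟩
    else
      .inr ⟨Fin.tail x.val, by
        have hx := x.2; rw [Fin.sum_univ_succ, zmod2_ne_zero h] at hx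
        intro h0
        rw [show (∑ i, Fin.tail x.val i) = ∑ i : Fin n, x.val i.succ from rfl] at h0
        rw [h0] at hx; exact one_ne_zero hx⟩
  invFun u := match u with
    | .inl u => ⟨Fin.cons 0 u.val, by rw [Fin.sum_cons, zero_add]; exact u.2⟩
    | .inr u => ⟨Fin.cons 1 u.val, by
        rw [Fin.sum_cons, zmod2_ne_zero u.2]; decide⟩
  left_inv x := by
    by_cases h : x.val 0 = 0
    · simp only [h, dif_pos]
      refine Subtype.ext (funext fun i => ?_)
      induction i using Fin.cases with
      | zero => simp [h]
      | succ j => simp [Fin.tail]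
    · simp only [h, dif_neg, not_false_iff]
      refine Subtype.ext (funext fun i => ?_)
      induction i using Fin.cases with
      | zero => simp [zmod2_ne_zero h]
      | succ j => simp [Fin.tail]
  right_inv u := by
    rcases u with u | u
    · simp only [Fin.cons_zero, dif_pos]
      refine congrArg Sum.inl (Subtype.ext (funext fun i => ?_))
      simp [Fin.tail]
    · have h1 : (Fin.cons (α := fun _ => ZMod 2) 1 u.val) 0 ≠ 0 := by simp
      simp only [h1, dif_neg, not_false_iff]
      refine congrArg Sum.inr (Subtype.ext (funext fun i => ?_))
      simp [Fin.tail]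

def consO (n : ℕ) : oddV (n+1) ≃ oddV n ⊕ evenV n where
  toFun x :=
    if h : x.val 0 = 0 then
      .inl ⟨Fin.tail x.val, by
        have hx := x.2; rw [Fin.sum_univ_succ, h, zero_add] at hx
        simpa [Fin.tail] using hx⟩
    else
      .inr ⟨Fin.tail x.val, by
        have hx := x.2; rw [Fin.sum_univ_succ, zmod2_ne_zero h] at hx
        rcases zmod2_cases (∑ i, Fin.tail x.val i) with h0 | h0
        · exact h0
        · exfalso; apply hx
          rw [show (∑ i : Fin n, x.val i.succ) = ∑ i, Fin.tail x.val i from rfl, h0]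
          decide⟩
  invFun u := match u with
    | .inl u => ⟨Fin.cons 0 u.val, by rw [Fin.sum_cons, zero_add]; exact u.2⟩
    | .inr u => ⟨Fin.cons 1 u.val, by rw [Fin.sum_cons, u.2, add_zero]; decide⟩
  left_inv x := by
    by_cases h : x.val 0 = 0
    · simp only [h, dif_pos]
      refine Subtype.ext (funext fun i => ?_)
      induction i using Fin.cases with
      | zero => simp [h]
      | succ j => simp [Fin.tail]
    · simp only [h, dif_neg, not_false_iff]
      refine Subtype.ext (funext fun i => ?_)
      induction i using Fin.cases with
      | zero => simp [zmod2_ne_zero h]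
      | succ j => simp [Fin.tail]
  right_inv u := by
    rcases u with u | u
    · simp only [Fin.cons_zero, dif_pos]
      refine congrArg Sum.inl (Subtype.ext (funext fun i => ?_))
      simp [Fin.tail]
    · have h1 : (Fin.cons (α := fun _ => ZMod 2) 1 u.val) 0 ≠ 0 := by simp
      simp only [h1, dif_neg, not_false_iff]
      refine congrArg Sum.inr (Subtype.ext (funext fun i => ?_))
      simp [Fin.tail]

lemma consE_symm_inl (n : ℕ) (u : evenV n) :
    (((consE n).symm (.inl u)).val : Fin (n+1) → ZMod 2)
      = Fin.cons (α := fun _ => ZMod 2) 0 u.val := rfl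
lemma consE_symm_inr (n : ℕ) (u : oddV n) :
    (((consE n).symm (.inr u)).val : Fin (n+1) → ZMod 2)
      = Fin.cons (α := fun _ => ZMod 2) 1 u.val := rfl
lemma consO_symm_inl (n : ℕ) (u : oddV n) :
    (((consO n).symm (.inl u)).val : Fin (n+1) → ZMod 2)
      = Fin.cons (α := fun _ => ZMod 2) 0 u.val := rfl
lemma consO_symm_inr (n : ℕ) (u : evenV n) :
    (((consO n).symm (.inr u)).val : Fin (n+1) → ZMod 2)
      = Fin.cons (α := fun _ => ZMod 2) 1 u.val := rfl

lemma neg_one_add_neg_one {ι : Type} [Fintype ι] [DecidableEq ι] :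
    (-1 + -1 : Matrix ι ι (ZMod 3)) = 1 := by
  ext i j
  by_cases h : i = j <;> simp [Matrix.one_apply, h] <;> decide


theorem exists_invertible_weighted_adjacency (n : ℕ) (hn : 1 ≤ n) :
    ∃ (A : Matrix (evenV n) (oddV n) (ZMod 3))
      (B : Matrix (oddV n) (evenV n) (ZMod 3)),
      A * B = 1 ∧ B * A = 1 ∧
      (∀ (x : evenV n) (y : oddV n), A x y ≠ 0 ↔ (hypercube n).Adj x.val y.val) ∧
      (∀ (y : oddV n) (x : evenV n), B y x ≠ 0 ↔ (hypercube n).Adj y.val x.val) ∧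
      Fintype.card (evenV n) = 2 ^ (n - 1) ∧
      Fintype.card (oddV n) = 2 ^ (n - 1) := by
  induction n, hn using Nat.le_induction with
  | base =>
    have he : ∀ x : evenV 1, x.val = fun _ => 0 := by
      intro x
      funext i
      rw [Fin.eq_zero i]
      have hx := x.2
      rwa [Fin.sum_univ_one] at hx
    have ho : ∀ y : oddV 1, y.val = fun _ => 1 := by
      intro y
      funext i
      rw [Fin.eq_zero i]
      have hy := y.2
      rw [Fin.sum_univ_one] at hy
      exact zmod2_ne_zero hy
    haveI : Unique (evenV 1) :=
      { default := ⟨fun _ => 0, by simp⟩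
        uniq := fun a => Subtype.ext (by rw [he a]) }
    haveI : Unique (oddV 1) :=
      { default := ⟨fun _ => 1, by rw [Fin.sum_univ_one]; decide⟩
        uniq := fun a => Subtype.ext (by rw [ho a]) }
    refine ⟨Matrix.of fun _ _ => 1, Matrix.of fun _ _ => 1, ?_, ?_, ?_, ?_, ?_, ?_⟩
    · ext x x'
      rw [Subsingleton.elim x' x, Matrix.mul_apply]
      simp [Matrix.one_apply]
    · ext y y'
      rw [Subsingleton.elim y' y, Matrix.mul_apply]
      simp [Matrix.one_apply]
    · intro x y
      rw [he x, ho y]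
      refine iff_of_true (by simp) ⟨0, by decide, fun j _ => Fin.eq_zero j⟩
    · intro y x
      rw [he x, ho y]
      refine iff_of_true (by simp) ⟨0, by decide, fun j _ => Fin.eq_zero j⟩
    · simp [Fintype.card_unique]
    · simp [Fintype.card_unique]
  | succ n hn ih =>
    obtain ⟨A, B, hAB, hBA, hA, hB, hcE, hcO⟩ := ih
    have hprod1 : (Matrix.fromBlocks A 1 1 (-B)) * (Matrix.fromBlocks (-B) (-1) (-1) A) = 1 := by
      rw [Matrix.fromBlocks_multiply]
      have e11 : A * -B + 1 * -1 = (1 : Matrix (evenV n) (evenV n) (ZMod 3)) := by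
        rw [Matrix.mul_neg, hAB, Matrix.one_mul]; exact neg_one_add_neg_one
      have e12 : A * (-1 : Matrix (oddV n) (oddV n) (ZMod 3)) +
          (1 : Matrix (evenV n) (evenV n) (ZMod 3)) * A = 0 := by
        rw [Matrix.mul_neg, Matrix.mul_one, Matrix.one_mul, neg_add_cancel]
      have e21 : (1 : Matrix (oddV n) (oddV n) (ZMod 3)) * -B +
          -B * (-1 : Matrix (evenV n) (evenV n) (ZMod 3)) = 0 := by
        rw [Matrix.one_mul, Matrix.mul_neg, Matrix.neg_mul, Matrix.mul_one, neg_neg, neg_add_cancel]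
      have e22 : (1 : Matrix (oddV n) (oddV n) (ZMod 3)) *
          (-1 : Matrix (oddV n) (oddV n) (ZMod 3)) + -B * A = 1 := by
        rw [Matrix.one_mul, Matrix.neg_mul, hBA]; exact neg_one_add_neg_one
      rw [e11, e12, e21, e22, Matrix.fromBlocks_one]
    have hprod2 : (Matrix.fromBlocks (-B) (-1) (-1) A) * (Matrix.fromBlocks A 1 1 (-B)) = 1 := by
      rw [Matrix.fromBlocks_multiply]
      have e11 : -B * A + (-1 : Matrix (oddV n) (oddV n) (ZMod 3)) *
          (1 : Matrix (oddV n) (oddV n) (ZMod 3)) = 1 := by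
        rw [Matrix.neg_mul, hBA, Matrix.neg_mul, Matrix.one_mul]; exact neg_one_add_neg_one
      have e12 : -B * (1 : Matrix (evenV n) (evenV n) (ZMod 3)) +
          (-1 : Matrix (oddV n) (oddV n) (ZMod 3)) * -B = 0 := by
        rw [Matrix.mul_one, Matrix.mul_neg, Matrix.neg_mul, Matrix.one_mul, neg_neg, neg_add_cancel]
      have e21 : (-1 : Matrix (evenV n) (evenV n) (ZMod 3)) * A + A *
          (1 : Matrix (oddV n) (oddV n) (ZMod 3)) = 0 := by
        rw [Matrix.mul_one, Matrix.neg_mul, Matrix.one_mul, neg_add_cancel]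
      have e22 : (-1 : Matrix (evenV n) (evenV n) (ZMod 3)) *
          (1 : Matrix (evenV n) (evenV n) (ZMod 3)) + A * -B = 1 := by
        rw [Matrix.mul_neg, hAB, Matrix.neg_mul, Matrix.one_mul]; exact neg_one_add_neg_one
      rw [e11, e12, e21, e22, Matrix.fromBlocks_one]
    refine ⟨(Matrix.fromBlocks A 1 1 (-B)).submatrix (consE n) (consO n),
            (Matrix.fromBlocks (-B) (-1) (-1) A).submatrix (consO n) (consE n),
            ?_, ?_, ?_, ?_, ?_, ?_⟩
    · rw [Matrix.submatrix_mul_equiv, hprod1, Matrix.submatrix_one_equiv]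
    · rw [Matrix.submatrix_mul_equiv, hprod2, Matrix.submatrix_one_equiv]
    · intro x y
      rw [Matrix.submatrix_apply]
      rcases hE : consE n x with u | u <;> rcases hO : consO n y with v | v <;>
        [skip; skip; skip; skip] <;>
      · have hx := congrArg (consE n).symm hE
        rw [Equiv.symm_apply_apply] at hx
        have hy := congrArg (consO n).symm hO
        rw [Equiv.symm_apply_apply] at hy
        rw [show x.val = _ from congrArg Subtype.val hx,
            show y.val = _ from congrArg Subtype.val hy]
        first
        | (rw [consE_symm_inl, consO_symm_inl, adj_cons, Matrix.fromBlocks_apply₁₁]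
           simp [hA u v])
        | (rw [consE_symm_inl, consO_symm_inr, adj_cons, Matrix.fromBlocks_apply₁₂]
           by_cases huv : u = v <;>
             simp [Matrix.one_apply, huv, Subtype.ext_iff, show (0:ZMod 2) ≠ 1 by decide] <;>
             exact fun h => huv (Subtype.ext h))
        | (rw [consE_symm_inr, consO_symm_inl, adj_cons, Matrix.fromBlocks_apply₂₁]
           by_cases huv : u = v <;>
             simp [Matrix.one_apply, huv, Subtype.ext_iff, show (1:ZMod 2) ≠ 0 by decide] <;>
             exact fun h => huv (Subtype.ext h))
        | (rw [consE_symm_inr, consO_symm_inr, adj_cons, Matrix.fromBlocks_apply₂₂]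
           simp [Matrix.neg_apply, hB u v])
    · intro y x
      rw [Matrix.submatrix_apply]
      rcases hO : consO n y with v | v <;> rcases hE : consE n x with u | u <;>
        [skip; skip; skip; skip] <;>
      · have hx := congrArg (consE n).symm hE
        rw [Equiv.symm_apply_apply] at hx
        have hy := congrArg (consO n).symm hO
        rw [Equiv.symm_apply_apply] at hy
        rw [show x.val = _ from congrArg Subtype.val hx,
            show y.val = _ from congrArg Subtype.val hy]
        first
        | (rw [consO_symm_inl, consE_symm_inl, adj_cons, Matrix.fromBlocks_apply₁₁]
           simp [Matrix.neg_apply, hB v u])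
        | (rw [consO_symm_inl, consE_symm_inr, adj_cons, Matrix.fromBlocks_apply₁₂]
           by_cases huv : v = u <;>
             simp [Matrix.neg_apply, Matrix.one_apply, huv, Subtype.ext_iff,
               show (0:ZMod 2) ≠ 1 by decide] <;> exact fun h => huv (Subtype.ext h))
        | (rw [consO_symm_inr, consE_symm_inl, adj_cons, Matrix.fromBlocks_apply₂₁]
           by_cases huv : v = u <;>
             simp [Matrix.neg_apply, Matrix.one_apply, huv, Subtype.ext_iff,
               show (1:ZMod 2) ≠ 0 by decide] <;> exact fun h => huv (Subtype.ext h))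
        | (rw [consO_symm_inr, consE_symm_inr, adj_cons, Matrix.fromBlocks_apply₂₂]
           simp [hA v u])
    · rw [Fintype.card_congr (consE n), Fintype.card_sum, hcE, hcO, ← two_mul,
        ← pow_succ', Nat.sub_add_cancel hn]
      simp
    · rw [Fintype.card_congr (consO n), Fintype.card_sum, hcE, hcO, ← two_mul,
        ← pow_succ', Nat.sub_add_cancel hn]
      simp
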